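/- For positive definite matrices A and B, the matrix geometric mean satisfies the arithmetic–geometric mean inequality: A # B ≤ (A + B)/2 in the Loewner order. -/

import Mathlib

open Matrix Kronecker
open scoped ComplexOrder

noncomputable section
attribute [local instance] Classical.propDecidable

/-- Moore–Penrose pseudoinverse of a square complex matrix. -/
def pinv {n : Type*} [Fintype n] [DecidableEq n] (A : Matrix n n ℂ) : Matrix n n ℂ :=
  if h : ∃ B : Matrix n n ℂ,
      A * B * A = A ∧ B * A * B = B ∧ (A * B)ᴴ = A * B ∧ (B * A)ᴴ = B * A
  then h.choose else 0

/-- Positive semidefinite square root (junk value `0` if the matrix is not PSD). -/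
def msqrt {n : Type*} [Fintype n] [DecidableEq n] (A : Matrix n n ℂ) : Matrix n n ℂ :=
  if h : A.PosSemidef then
    (h.1.eigenvectorUnitary : Matrix n n ℂ) * diagonal ((↑) ∘ (√·) ∘ h.1.eigenvalues) *
      (star (h.1.eigenvectorUnitary : Matrix n n ℂ))
  else 0

/-- `sgn(X) = U sgn(Σ) V*` for an SVD `X = U Σ V*`; equivalently `X (X* X)^{-1/2}`
with the Moore–Penrose pseudoinverse. -/
def msgn {n : Type*} [Fintype n] [DecidableEq n] (X : Matrix n n ℂ) : Matrix n n ℂ :=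
  X * pinv (msqrt (Xᴴ * X))

/-- Matrix geometric mean `A # B = A^{1/2} (A^{-1/2} B A^{-1/2})^{1/2} A^{1/2}`
(with Moore–Penrose pseudoinverses). -/
def geo {n : Type*} [Fintype n] [DecidableEq n] (A B : Matrix n n ℂ) : Matrix n n ℂ :=
  msqrt A * msqrt (pinv (msqrt A) * B * pinv (msqrt A)) * msqrt A

/-- The unnormalized maximally entangled state `|Ω⟩ = ∑ i, |i⟩ ⊗ |i⟩`. -/
def omegaVec (d : ℕ) : Fin d × Fin d → ℂ := fun p => if p.1 = p.2 then 1 else 0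

/-- Reduced density matrix of `|C⟩⟨C|` on the first subsystem
(partial trace over the second subsystem). -/
def reducedA {d : ℕ} (C : Fin d × Fin d → ℂ) : Matrix (Fin d) (Fin d) ℂ :=
  Matrix.of fun i j => ∑ k, C (i, k) * star (C (j, k))

/-- Partial trace over the first subsystem of the operator `|D⟩⟨C|`. -/
def trA {d : ℕ} (D C : Fin d × Fin d → ℂ) : Matrix (Fin d) (Fin d) ℂ :=
  Matrix.of fun j l => ∑ i, D (i, j) * star (C (i, l))

/-- `ℓ²→ℓ²` operator norm (largest singular value). -/
def opNorm {n : Type*} [Fintype n] [DecidableEq n] (A : Matrix n n ℂ) : ℝ :=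
  ‖(Matrix.toEuclideanCLM (𝕜 := ℂ) A : EuclideanSpace ℂ n →L[ℂ] EuclideanSpace ℂ n)‖

/-- `P` is the orthogonal projection onto the image (column space) of `A`. -/
def IsOrthProjOnto {n : Type*} [Fintype n] [DecidableEq n] (P A : Matrix n n ℂ) : Prop :=
  Pᴴ = P ∧ P * P = P ∧ LinearMap.range P.mulVecLin = LinearMap.range A.mulVecLin

/-- `η` is the smallest nonzero eigenvalue of the Hermitian matrix `M`. -/
def IsSmallestNonzeroEigenvalue {n : Type*} [Fintype n] [DecidableEq n]
    (M : Matrix n n ℂ) (η : ℝ) : Prop :=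
  ∃ hM : M.IsHermitian, η ≠ 0 ∧ (∃ i, hM.eigenvalues i = η) ∧
    ∀ i, hM.eigenvalues i ≠ 0 → η ≤ hM.eigenvalues i

lemma pinv_eq_inv {n : Type*} [Fintype n] [DecidableEq n] (A : Matrix n n ℂ)
    (h : IsUnit A.det) : pinv A = A⁻¹ := by
  have h1 : A * A⁻¹ = 1 := Matrix.mul_nonsing_inv A h
  have h2 : A⁻¹ * A = 1 := Matrix.nonsing_inv_mul A h
  have hex : ∃ B : Matrix n n ℂ,
      A * B * A = A ∧ B * A * B = B ∧ (A * B)ᴴ = A * B ∧ (B * A)ᴴ = B * A :=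
    ⟨A⁻¹, by rw [h1, one_mul], by rw [h2, one_mul], by rw [h1, Matrix.conjTranspose_one],
      by rw [h2, Matrix.conjTranspose_one]⟩
  have hspec := hex.choose_spec.1
  have : pinv A = hex.choose := by rw [pinv, dif_pos hex]
  rw [this]
  calc hex.choose = (A⁻¹ * A) * hex.choose * (A * A⁻¹) := by rw [h2, h1, one_mul, mul_one]
    _ = A⁻¹ * (A * hex.choose * A) * A⁻¹ := by simp only [mul_assoc]
    _ = A⁻¹ * A * A⁻¹ := by rw [hspec, mul_assoc]
    _ = A⁻¹ := by rw [h2, one_mul]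

lemma msqrt_posSemidef' {n : Type*} [Fintype n] [DecidableEq n] (A : Matrix n n ℂ)
    (h : A.PosSemidef) : (msqrt A).PosSemidef := by
  rw [msqrt, dif_pos h]
  have hD : (diagonal ((↑) ∘ (√·) ∘ h.1.eigenvalues : n → ℂ)).PosSemidef := by
    rw [posSemidef_diagonal_iff]
    intro i
    simp only [Function.comp_apply]
    exact_mod_cast Real.sqrt_nonneg _
  have := hD.mul_mul_conjTranspose_same (h.1.eigenvectorUnitary : Matrix n n ℂ)
  rwa [← Matrix.star_eq_conjTranspose] at this

lemma msqrt_mul_self' {n : Type*} [Fintype n] [DecidableEq n] (A : Matrix n n ℂ)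
    (h : A.PosSemidef) : msqrt A * msqrt A = A := by
  rw [msqrt, dif_pos h]
  set U : Matrix n n ℂ := (h.1.eigenvectorUnitary : Matrix n n ℂ)
  have hU : star U * U = 1 := Unitary.coe_star_mul_self _
  have hDD : diagonal ((↑) ∘ (√·) ∘ h.1.eigenvalues : n → ℂ) *
      diagonal ((↑) ∘ (√·) ∘ h.1.eigenvalues : n → ℂ) =
      diagonal (RCLike.ofReal ∘ h.1.eigenvalues) := by
    rw [diagonal_mul_diagonal]
    congr 1
    funext i
    simp only [Function.comp_apply]
    rw [← Complex.ofReal_mul, Real.mul_self_sqrt (h.eigenvalues_nonneg i)]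
    rfl
  calc U * diagonal ((↑) ∘ (√·) ∘ h.1.eigenvalues) * star U *
        (U * diagonal ((↑) ∘ (√·) ∘ h.1.eigenvalues) * star U)
      = U * (diagonal ((↑) ∘ (√·) ∘ h.1.eigenvalues) * (star U * U) *
          diagonal ((↑) ∘ (√·) ∘ h.1.eigenvalues)) * star U := by simp only [mul_assoc]
    _ = A := by
      rw [hU, mul_one, hDD]
      conv_rhs => rw [h.1.spectral_theorem]
      rw [Unitary.conjStarAlgAut_apply]

theorem geo_mean_le_arith {n : Type*} [Fintype n] [DecidableEq n]
    (A B : Matrix n n ℂ) (hA : A.PosDef) (hB : B.PosDef) :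
    ((2 : ℂ)⁻¹ • (A + B) - geo A B).PosSemidef := by
  set S := msqrt A with hSdef
  have hSpsd : S.PosSemidef := msqrt_posSemidef' A hA.posSemidef
  have hSH : Sᴴ = S := hSpsd.1
  have hS2 : S * S = A := msqrt_mul_self' A hA.posSemidef
  have hSu : IsUnit S.det := by
    have h1 : S.det * S.det = A.det := by rw [← Matrix.det_mul, hS2]
    have h2 : IsUnit (S.det * S.det) := by rw [h1]; exact isUnit_iff_ne_zero.mpr hA.det_pos.ne'
    exact isUnit_of_mul_isUnit_left h2
  have hpinv : pinv S = S⁻¹ := pinv_eq_inv S hSu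
  have hSinvH : (S⁻¹)ᴴ = S⁻¹ := by rw [Matrix.conjTranspose_nonsing_inv, hSH]
  set M := S⁻¹ * B * S⁻¹ with hMdef
  have hMpsd : M.PosSemidef := by
    have := hB.posSemidef.conjTranspose_mul_mul_same S⁻¹
    rwa [hSinvH] at this
  set T := msqrt M with hTdef
  have hTpsd : T.PosSemidef := msqrt_posSemidef' M hMpsd
  have hTH : Tᴴ = T := hTpsd.1
  have hT2 : T * T = M := msqrt_mul_self' M hMpsd
  have hgeo : geo A B = S * T * S := by rw [geo, ← hSdef, hpinv, ← hMdef, ← hTdef]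
  have hSMS : S * M * S = B := by
    rw [hMdef, ← mul_assoc, ← mul_assoc, Matrix.mul_nonsing_inv _ hSu, one_mul,
      mul_assoc, Matrix.nonsing_inv_mul _ hSu, mul_one]
  set c : ℂ := Complex.ofReal (Real.sqrt 2⁻¹) with hcdef
  set C : Matrix n n ℂ := c • ((1 - T) * S) with hCdef
  have hkey : (2 : ℂ)⁻¹ • (A + B) - geo A B = Cᴴ * C := by
    have hc2 : star c * c = (2 : ℂ)⁻¹ := by
      rw [hcdef, Complex.star_def, Complex.conj_ofReal, ← Complex.ofReal_mul,
        Real.mul_self_sqrt (by norm_num)]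
      norm_num
    rw [hCdef, Matrix.conjTranspose_smul, Matrix.smul_mul, Matrix.mul_smul, smul_smul, hc2,
      Matrix.conjTranspose_mul, hSH, Matrix.conjTranspose_sub, Matrix.conjTranspose_one, hTH]
    have hexp : S * (1 - T) * ((1 - T) * S) = A + B - (S * T * S + S * T * S) := by
      calc S * (1 - T) * ((1 - T) * S)
          = S * S - S * T * S - S * T * S + S * (T * T) * S := by noncomm_ring
        _ = A + B - (S * T * S + S * T * S) := by rw [hS2, hT2, hSMS]; abel
    rw [hexp, hgeo]
    module
  rw [hkey]
  exact Matrix.posSemidef_conjTranspose_mul_self C
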